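/- arXiv:2307.12125 — 2 statements merged into one kernel-verified Lean document; each statement's English description precedes it below -/
import Mathlib

section
/- Let b(r) = { x ∈ ℝ^n_{≥0} : x_1 + ... + x_n < r } be the open simplex of size r. If Ω ⊂ ℝ^n_{≥0} is open, bounded, downward closed, and contains the origin in its closure with nonempty interior, then there exists r > 0 and a point (a_1,...,a_n) ∈ ∂Ω with a_1 + ... + a_n = r such that b(r) ⊂ Ω. In other words, the largest simplex included in Ω touches the boundary of Ω at a point whose coordinate sum equals r. -/
open Finset

/-- The open simplex `b(r) = {x ∈ ℝⁿ_{≥0} : Σ xᵢ < r}`. -/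
def openSimplex (n : ℕ) (r : ℝ) : Set (Fin n → ℝ) :=
  {x | (∀ i, 0 ≤ x i) ∧ ∑ i, x i < r}

/-- For a nonempty bounded downward-closed subset `Ω` of the orthant, open in the
subspace topology, the largest simplex `b(r) ⊆ Ω` touches `∂Ω` at a point of
coordinate sum `r`. -/
theorem largest_simplex_touches_boundary (n : ℕ) (hn : 0 < n)
    (Ω : Set (Fin n → ℝ)) (hne : Ω.Nonempty)
    (hbdd : Bornology.IsBounded Ω)
    (U : Set (Fin n → ℝ)) (hU : IsOpen U) (hΩU : Ω = U ∩ {x | ∀ i, 0 ≤ x i})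
    (hdc : ∀ μ ∈ Ω, ∀ x : Fin n → ℝ, (∀ i, 0 ≤ x i) → (∀ i, x i ≤ μ i) → x ∈ Ω) :
    ∃ r : ℝ, 0 < r ∧ openSimplex n r ⊆ Ω ∧
      ∃ a : Fin n → ℝ, a ∈ frontier Ω ∧ ∑ i, a i = r := by
  classical
  -- the orthant is closed
  have horth : IsClosed {x : Fin n → ℝ | ∀ i, 0 ≤ x i} := by
    have : {x : Fin n → ℝ | ∀ i, 0 ≤ x i} = ⋂ i, {x | 0 ≤ x i} := by
      ext x; simp [Set.mem_iInter]
    rw [this]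
    exact isClosed_iInter fun i => isClosed_le continuous_const (continuous_apply i)
  have hΩorth : Ω ⊆ {x : Fin n → ℝ | ∀ i, 0 ≤ x i} := by
    rw [hΩU]; exact Set.inter_subset_right
  -- 0 ∈ Ω
  obtain ⟨μ, hμ⟩ := hne
  have h0 : (0 : Fin n → ℝ) ∈ Ω :=
    hdc μ hμ 0 (fun i => le_rfl) (fun i => hΩorth hμ i)
  -- S : closed set of orthant points not in Ω
  set S : Set (Fin n → ℝ) := {x | (∀ i, 0 ≤ x i) ∧ x ∉ Ω} with hS
  have hSclosed : IsClosed S := by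
    have : S = {x : Fin n → ℝ | ∀ i, 0 ≤ x i} ∩ Uᶜ := by
      ext x
      simp only [hS, Set.mem_setOf_eq, Set.mem_inter_iff, Set.mem_compl_iff, hΩU]
      constructor
      · rintro ⟨hx, hxΩ⟩; exact ⟨hx, fun hxU => hxΩ ⟨hxU, hx⟩⟩
      · rintro ⟨hx, hxU⟩; exact ⟨hx, fun h => hxU h.1⟩
    rw [this]
    exact horth.inter hU.isClosed_compl
  -- a big constant point in S
  obtain ⟨R, hR⟩ := hbdd.exists_norm_le
  set p : Fin n → ℝ := fun _ => |R| + 1 with hp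
  have hpS : p ∈ S := by
    simp only [hS, Set.mem_setOf_eq]
    refine ⟨fun i => by positivity, fun hpΩ => ?_⟩
    have h1 : ‖p ⟨0, hn⟩‖ ≤ ‖p‖ := norm_le_pi_norm p ⟨0, hn⟩
    have h2 : ‖p‖ ≤ R := hR p hpΩ
    have : |R| + 1 ≤ R := by
      have : ‖p ⟨0, hn⟩‖ = |R| + 1 := by
        simp [hp, abs_of_nonneg (by positivity : (0:ℝ) ≤ |R| + 1)]
      linarith [le_trans h1 h2, this]
    linarith [le_abs_self R]
  set M : ℝ := ∑ i, p i with hM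
  -- T : compact truncation of S
  set T : Set (Fin n → ℝ) := S ∩ {x | ∑ i, x i ≤ M} with hT
  have hf : Continuous fun x : Fin n → ℝ => ∑ i, x i :=
    continuous_finset_sum _ fun i _ => continuous_apply i
  have hpT : p ∈ T := ⟨hpS, by simp only [Set.mem_setOf_eq]; exact le_rfl⟩
  have hTsub : T ⊆ Set.Icc (0 : Fin n → ℝ) (fun _ => M) := by
    rintro x ⟨⟨hx0, _⟩, hxM⟩
    refine ⟨fun i => hx0 i, fun i => ?_⟩
    calc x i ≤ ∑ j, x j := Finset.single_le_sum (fun j _ => hx0 j) (mem_univ i)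
    _ ≤ M := hxM
  have hTclosed : IsClosed T := hSclosed.inter (isClosed_le hf continuous_const)
  have hTcomp : IsCompact T := (isCompact_Icc).of_isClosed_subset hTclosed hTsub
  obtain ⟨a, haT, hamin⟩ :=
    hTcomp.exists_isMinOn ⟨p, hpT⟩ hf.continuousOn
  set r : ℝ := ∑ i, a i with hr
  have haS : a ∈ S := haT.1
  have haM : r ≤ M := haT.2
  have ha0 : ∀ i, 0 ≤ a i := haS.1
  -- lower bound on sums over S
  have hSlb : ∀ x ∈ S, r ≤ ∑ i, x i := by
    intro x hx
    by_cases hxM : ∑ i, x i ≤ M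
    · exact hamin ⟨hx, hxM⟩
    · linarith
  -- simplex inclusion
  have hsub : openSimplex n r ⊆ Ω := by
    rintro x ⟨hx0, hxr⟩
    by_contra hxΩ
    exact absurd (hSlb x ⟨hx0, hxΩ⟩) (not_le.mpr hxr)
  -- r > 0
  have h0S : (0 : Fin n → ℝ) ∉ S := fun h => h.2 h0
  obtain ⟨ε, hε, hball⟩ := Metric.isOpen_iff.mp hSclosed.isOpen_compl 0 h0S
  have hrpos : 0 < r := by
    have hanb : a ∉ Metric.ball (0 : Fin n → ℝ) ε := fun h => (hball h) haS
    have h1 : ε ≤ ‖a‖ := by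
      by_contra h
      exact hanb (by simpa [dist_zero_right] using not_le.mp h)
    have h2 : ‖a‖ ≤ r := by
      have hr0 : 0 ≤ r := Finset.sum_nonneg fun i _ => ha0 i
      rw [pi_norm_le_iff_of_nonneg hr0]
      intro i
      rw [Real.norm_eq_abs, abs_of_nonneg (ha0 i)]
      exact Finset.single_le_sum (fun j _ => ha0 j) (mem_univ i)
    linarith
  refine ⟨r, hrpos, hsub, a, ?_, rfl⟩
  -- a ∈ frontier Ω
  rw [frontier, Set.mem_diff]
  constructor
  · -- a ∈ closure Ω : limit of (1 - 1/(k+1)) • a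
    have htend : Filter.Tendsto (fun k : ℕ => (1 - 1 / (k + 1 : ℝ)) • a)
        Filter.atTop (nhds a) := by
      have h1 : Filter.Tendsto (fun k : ℕ => (1 - 1 / (k + 1 : ℝ)))
          Filter.atTop (nhds 1) := by
        have := tendsto_one_div_add_atTop_nhds_zero_nat (𝕜 := ℝ)
        have := (tendsto_const_nhds (x := (1:ℝ)) (f := Filter.atTop (α := ℕ))).sub this
        simpa using this
      have := h1.smul_const a
      simpa using this
    refine mem_closure_of_tendsto htend (Filter.Eventually.of_forall fun k => ?_)
    have hc0 : (0:ℝ) ≤ 1 - 1 / (k + 1 : ℝ) := by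
      have : 1 / (k + 1 : ℝ) ≤ 1 := by
        rw [div_le_one (by positivity)]
        linarith [Nat.cast_nonneg (α := ℝ) k]
      linarith
    have hc1 : 1 - 1 / (k + 1 : ℝ) < 1 := by
      have : 0 < 1 / (k + 1 : ℝ) := by positivity
      linarith
    apply hsub
    constructor
    · intro i
      simp only [Pi.smul_apply, smul_eq_mul]
      exact mul_nonneg hc0 (ha0 i)
    · have : ∑ i, ((1 - 1 / (k + 1 : ℝ)) • a) i = (1 - 1 / (k + 1 : ℝ)) * r := by
        simp [Finset.mul_sum, hr]
      rw [this]
      calc (1 - 1 / (k + 1 : ℝ)) * r < 1 * r := by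
            exact mul_lt_mul_of_pos_right hc1 hrpos
      _ = r := one_mul r
  · exact fun h => haS.2 (interior_subset h)
end

section
/- Let Ω ⊂ ℝ^n_{≥0} be downward closed (if μ ∈ Ω and 0 ≤ x ≤ μ then x ∈ Ω) with (a_1,...,a_n) ∈ ∂Ω, a_i > 0, and set r = Σ a_i. Assume (i) b(r) ⊂ Ω (the simplex of size r is contained in Ω), (ii) Ω ⊂ l(a_1,...,a_n) (Ω is contained in the L-shaped region), and (iii) for every r' > r there is a symplectic embedding L(a_1,...,a_n) ↪ Z(r'). Then c_G(X_Ω) = c_Z(X_Ω) = r, and hence every normalized symplectic capacity c satisfies c(X_Ω) = r. -/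
open Finset

/-- The moment map. -/
noncomputable def momentMap (n : ℕ) (z : Fin n → ℂ) : Fin n → ℝ :=
  fun i => Real.pi * ‖z i‖ ^ 2

/-- The toric ball `B(r)`. -/
noncomputable def toricBall (n : ℕ) (r : ℝ) : Set (Fin n → ℂ) :=
  momentMap n ⁻¹' {x | ∑ i, x i < r}

/-- The toric cylinder `Z(r)` (using the last coordinate). -/
noncomputable def toricCyl (n : ℕ) (r : ℝ) [NeZero n] : Set (Fin n → ℂ) :=
  momentMap n ⁻¹' {x | x ⟨n - 1, Nat.sub_lt (NeZero.pos n) one_pos⟩ < r}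

/-- The L-shaped toric domain `L(a₁,…,aₙ)`. -/
noncomputable def toricL (n : ℕ) (a : Fin n → ℝ) : Set (Fin n → ℂ) :=
  momentMap n ⁻¹' (⋃ k : Fin n, {x | x k < a k})

/-- Gromov width w.r.t. an abstract symplectic embedding relation. -/
noncomputable def gromovWidth (n : ℕ)
    (emb : Set (Fin n → ℂ) → Set (Fin n → ℂ) → Prop)
    (X : Set (Fin n → ℂ)) : ENNReal :=
  sSup {c | ∃ s : ℝ, 0 < s ∧ emb (toricBall n s) X ∧ c = ENNReal.ofReal s}

/-- Cylindrical capacity w.r.t. an abstract symplectic embedding relation. -/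
noncomputable def cylCap (n : ℕ) [NeZero n]
    (emb : Set (Fin n → ℂ) → Set (Fin n → ℂ) → Prop)
    (X : Set (Fin n → ℂ)) : ENNReal :=
  sInf {c | ∃ s : ℝ, 0 < s ∧ emb X (toricCyl n s) ∧ c = ENNReal.ofReal s}

/-- Deduction of Theorem 1 from Theorem 2: for a downward-closed `Ω` with
boundary point `a` (all `aᵢ > 0`, `r = Σ aᵢ`) such that `b(r) ⊆ Ω ⊆ l(a)` and
`L(a) ↪ Z(r')` for every `r' > r`, the Gromov width and cylindrical capacity of
`X_Ω` both equal `r`, so every normalized capacity of `X_Ω` equals `r`.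
(Gromov's nonsqueezing `B(s) ↪ Z(s') ⟹ s ≤ s'` is taken as a hypothesis.) -/
theorem capacities_agree_on_monotone_toric (n : ℕ) [NeZero n]
    (Ω : Set (Fin n → ℝ)) (a : Fin n → ℝ) (ha : ∀ i, 0 < a i)
    (hdc : ∀ μ ∈ Ω, ∀ x : Fin n → ℝ, (∀ i, 0 ≤ x i) → (∀ i, x i ≤ μ i) → x ∈ Ω)
    (haΩ : a ∈ frontier Ω)
    (hball : {x : Fin n → ℝ | (∀ i, 0 ≤ x i) ∧ ∑ i, x i < ∑ i, a i} ⊆ Ω)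
    (hL : Ω ⊆ ⋃ k : Fin n, {x : Fin n → ℝ | x k < a k})
    (emb : Set (Fin n → ℂ) → Set (Fin n → ℂ) → Prop)
    (emb_incl : ∀ X Y, X ⊆ Y → emb X Y)
    (emb_trans : ∀ X Y Z, emb X Y → emb Y Z → emb X Z)
    (nonsqueezing : ∀ s s' : ℝ, 0 < s → 0 < s' →
      emb (toricBall n s) (toricCyl n s') → s ≤ s')
    (hemb : ∀ r' : ℝ, ∑ i, a i < r' → emb (toricL n a) (toricCyl n r')) :
    gromovWidth n emb (momentMap n ⁻¹' Ω) = ENNReal.ofReal (∑ i, a i) ∧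
    cylCap n emb (momentMap n ⁻¹' Ω) = ENNReal.ofReal (∑ i, a i) ∧
    ∀ c : Set (Fin n → ℂ) → ENNReal,
      (∀ X Y, emb X Y → c X ≤ c Y) →
      (∀ s : ℝ, 0 < s → c (toricBall n s) = ENNReal.ofReal s) →
      (∀ s : ℝ, 0 < s → c (toricCyl n s) = ENNReal.ofReal s) →
      c (momentMap n ⁻¹' Ω) = ENNReal.ofReal (∑ i, a i) := by
  set r := ∑ i, a i with hr
  have hrpos : 0 < r := Finset.sum_pos (fun i _ => ha i) Finset.univ_nonempty
  -- B(r) ⊆ X_Ω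
  have hBsub : toricBall n r ⊆ momentMap n ⁻¹' Ω := by
    intro z hz
    exact hball ⟨fun i => mul_nonneg Real.pi_pos.le (sq_nonneg _), hz⟩
  -- X_Ω ⊆ L(a)
  have hXL : momentMap n ⁻¹' Ω ⊆ toricL n a := fun z hz => hL hz
  -- X_Ω embeds into Z(r') for all r' > r
  have hXZ : ∀ r' : ℝ, r < r' → emb (momentMap n ⁻¹' Ω) (toricCyl n r') :=
    fun r' hr' => emb_trans _ _ _ (emb_incl _ _ hXL) (hemb r' hr')
  -- any s with emb (B s) X_Ω satisfies s ≤ r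
  have hkey : ∀ s : ℝ, 0 < s → emb (toricBall n s) (momentMap n ⁻¹' Ω) → s ≤ r := by
    intro s hs hembs
    by_contra h
    push_neg at h
    have h2 : r < (r + s) / 2 := by linarith
    have h3 : s ≤ (r + s) / 2 :=
      nonsqueezing s _ hs (by linarith)
        (emb_trans _ _ _ hembs (hXZ _ h2))
    linarith
  have hgw : gromovWidth n emb (momentMap n ⁻¹' Ω) = ENNReal.ofReal r := by
    apply le_antisymm
    · apply sSup_le
      rintro c ⟨s, hs, hembs, rfl⟩
      exact ENNReal.ofReal_le_ofReal (hkey s hs hembs)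
    · exact le_sSup ⟨r, hrpos, emb_incl _ _ hBsub, rfl⟩
  refine ⟨hgw, ?_, ?_⟩
  · apply le_antisymm
    · apply ENNReal.le_of_forall_pos_le_add
      intro ε hε _
      have hmem : ENNReal.ofReal (r + ε) ∈
          {c | ∃ s : ℝ, 0 < s ∧ emb (momentMap n ⁻¹' Ω) (toricCyl n s) ∧
            c = ENNReal.ofReal s} :=
        ⟨r + ε, by positivity, hXZ _ (by simpa using hε), rfl⟩
      calc cylCap n emb (momentMap n ⁻¹' Ω) ≤ ENNReal.ofReal (r + ε) := sInf_le hmem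
        _ = ENNReal.ofReal r + ENNReal.ofReal ε := ENNReal.ofReal_add hrpos.le (by positivity)
        _ = ENNReal.ofReal r + ε := by rw [ENNReal.ofReal_coe_nnreal]
    · apply le_sInf
      rintro c ⟨s, hs, hembs, rfl⟩
      exact ENNReal.ofReal_le_ofReal
        (nonsqueezing r s hrpos hs (emb_trans _ _ _ (emb_incl _ _ hBsub) hembs))
  · intro c hmono hcB hcZ
    apply le_antisymm
    · apply ENNReal.le_of_forall_pos_le_add
      intro ε hε _
      calc c (momentMap n ⁻¹' Ω) ≤ c (toricCyl n (r + ε)) :=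
            hmono _ _ (hXZ _ (by simpa using hε))
        _ = ENNReal.ofReal (r + ε) := hcZ _ (by positivity)
        _ = ENNReal.ofReal r + ENNReal.ofReal ε := ENNReal.ofReal_add hrpos.le (by positivity)
        _ = ENNReal.ofReal r + ε := by rw [ENNReal.ofReal_coe_nnreal]
    · calc ENNReal.ofReal r = c (toricBall n r) := (hcB r hrpos).symm
        _ ≤ c (momentMap n ⁻¹' Ω) := hmono _ _ (emb_incl _ _ hBsub)
end
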